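/- arXiv:1101.3468 — 7 statements merged into one kernel-verified Lean document; each statement's English description precedes it below -/
import Mathlib

section
/- Let H be the hexagonal lattice with minimum distance 2 and D the closed unit disk. If P ⊂ ℝ²/H is a finite set of points such that for every translation t ∈ ℝ² some point of P is not covered by the translated close packing H + t + D, then the translated interstitia I(p) = (ℝ² \ (H + p + D))/H, for p ∈ P, cover the fundamental domain U, and hence |P| ≥ |U| / (2√3 − π) = 2√3/(2√3 − π) > 10, so |P| ≥ 11. -/
noncomputable section

open MeasureTheory Set Pointwise
open scoped ENNReal

abbrev E2 := EuclideanSpace ℝ (Fin 2)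

def pt (x y : ℝ) : E2 := WithLp.toLp 2 ![x, y]

/-- The hexagonal lattice with minimum distance `d`, generated by `(d,0)` and `(d/2, √3·d/2)`. -/
def hexLattice (d : ℝ) : Set E2 :=
  {p | ∃ m n : ℤ, p = (m : ℝ) • pt d 0 + (n : ℝ) • pt (d / 2) (Real.sqrt 3 * d / 2)}

namespace Stmt6Aux

lemma lin_indep : LinearIndependent ℝ ![pt 2 0, pt 1 (Real.sqrt 3)] := by
  rw [LinearIndependent.pair_iff]
  intro s t h
  have h0 := congrArg (fun v : E2 => v 0) h
  have h1 := congrArg (fun v : E2 => v 1) h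
  have h3 : (0:ℝ) < Real.sqrt 3 := Real.sqrt_pos.mpr (by norm_num)
  simp [pt, PiLp.smul_apply] at h0 h1
  constructor <;> nlinarith [h0, h1, h3]

def bb : Module.Basis (Fin 2) ℝ E2 :=
  basisOfLinearIndependentOfCardEqFinrank lin_indep (by simp [finrank_euclideanSpace])

lemma bb_coe : ⇑bb = ![pt 2 0, pt 1 (Real.sqrt 3)] :=
  coe_basisOfLinearIndependentOfCardEqFinrank _ _

abbrev L : Submodule ℤ E2 := Submodule.span ℤ (Set.range ⇑bb)

lemma range_bb : Set.range ⇑bb = {pt 2 0, pt 1 (Real.sqrt 3)} := by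
  rw [bb_coe]
  ext x
  simp [Matrix.range_cons, Matrix.range_empty]
  tauto

lemma hex_eq : hexLattice 2 = (L : Set E2) := by
  ext x
  rw [show (L : Set E2) = ↑(Submodule.span ℤ (Set.range ⇑bb)) from rfl, range_bb]
  simp only [hexLattice, Set.mem_setOf_eq, SetLike.mem_coe, Submodule.mem_span_pair]
  constructor
  · rintro ⟨m, n, rfl⟩
    refine ⟨m, n, ?_⟩
    rw [Int.cast_smul_eq_zsmul ℝ, Int.cast_smul_eq_zsmul ℝ]
    norm_num [pt]
  · rintro ⟨m, n, rfl⟩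
    refine ⟨m, n, ?_⟩
    rw [Int.cast_smul_eq_zsmul ℝ, Int.cast_smul_eq_zsmul ℝ]
    norm_num [pt]

lemma mem_L_iff (x : E2) : x ∈ L ↔
    ∃ m n : ℤ, x = (m : ℝ) • pt 2 0 + (n : ℝ) • pt 1 (Real.sqrt 3) := by
  constructor
  · intro hx
    have : x ∈ hexLattice 2 := by rw [hex_eq]; exact hx
    obtain ⟨m, n, rfl⟩ := this
    exact ⟨m, n, by norm_num [pt]⟩
  · rintro ⟨m, n, rfl⟩
    have : (m : ℝ) • pt 2 0 + (n : ℝ) • pt 1 (Real.sqrt 3) ∈ hexLattice 2 :=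
      ⟨m, n, by norm_num [pt]⟩
    rw [hex_eq] at this; exact this

lemma norm_ge (m n : ℤ) (h : ¬(m = 0 ∧ n = 0)) :
    2 ≤ ‖(m : ℝ) • pt 2 0 + (n : ℝ) • pt 1 (Real.sqrt 3)‖ := by
  have h3 : Real.sqrt 3 ^ 2 = 3 := Real.sq_sqrt (by norm_num)
  have key : (4:ℝ) ≤ ‖(m : ℝ) • pt 2 0 + (n : ℝ) • pt 1 (Real.sqrt 3)‖ ^ 2 := by
    rw [EuclideanSpace.norm_eq]
    rw [Real.sq_sqrt (by positivity)]
    have e0 : ((m : ℝ) • pt 2 0 + (n : ℝ) • pt 1 (Real.sqrt 3)) 0 = 2 * m + n := by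
      simp [pt, PiLp.smul_apply]; ring
    have e1 : ((m : ℝ) • pt 2 0 + (n : ℝ) • pt 1 (Real.sqrt 3)) 1 = n * Real.sqrt 3 := by
      simp [pt, PiLp.smul_apply]
    rw [Fin.sum_univ_two, e0, e1]
    have hmn : 1 ≤ (m:ℝ)^2 + m*n + n^2 := by
      have : (1:ℤ) ≤ m^2 + m*n + n^2 := by
        have hpos : (0:ℤ) < m^2 + m*n + n^2 := by
          rcases eq_or_ne n 0 with hn | hn
          · subst hn
            have hm : m ≠ 0 := fun hm => h ⟨hm, rfl⟩
            have := Int.one_le_abs hm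
            nlinarith [sq_abs m]
          · have := Int.one_le_abs hn
            nlinarith [sq_nonneg (2*m+n), sq_abs n]
        omega
      exact_mod_cast this
    rw [Real.norm_eq_abs, Real.norm_eq_abs, sq_abs, sq_abs]
    nlinarith [hmn, h3]
  nlinarith [key, norm_nonneg ((m : ℝ) • pt 2 0 + (n : ℝ) • pt 1 (Real.sqrt 3))]

lemma norm_ge' {x : E2} (hx : x ∈ L) (hx0 : x ≠ 0) : 2 ≤ ‖x‖ := by
  obtain ⟨m, n, rfl⟩ := (mem_L_iff x).mp hx
  refine norm_ge m n ?_
  rintro ⟨rfl, rfl⟩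
  simp at hx0

abbrev F : Set E2 := ZSpan.fundamentalDomain bb

lemma vol_F : volume F = ENNReal.ofReal (2 * Real.sqrt 3) := by
  rw [ZSpan.measure_fundamentalDomain bb volume (EuclideanSpace.basisFun (Fin 2) ℝ).toBasis]
  rw [show volume (ZSpan.fundamentalDomain (EuclideanSpace.basisFun (Fin 2) ℝ).toBasis) = 1 by
    rw [measure_congr (ZSpan.fundamentalDomain_ae_parallelepiped _ volume)]
    exact (EuclideanSpace.basisFun (Fin 2) ℝ).volume_parallelepiped]
  rw [mul_one, Module.Basis.det_apply]
  congr 1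
  rw [Matrix.det_fin_two]
  simp [Module.Basis.toMatrix_apply, bb_coe, pt]

lemma vol_ball (p : E2) : volume (Metric.closedBall p 1) = ENNReal.ofReal Real.pi := by
  rw [EuclideanSpace.volume_closedBall]
  simp only [Fintype.card_fin]
  rw [show ((2:ℕ):ℝ)/2 + 1 = 2 by norm_num]
  rw [Real.Gamma_two, div_one, Real.sq_sqrt Real.pi_nonneg]
  simp


instance : IsZLattice ℝ L := inferInstance

lemma vadd_cb (g : ↥L.toAddSubgroup) (p : E2) :
    g +ᵥ Metric.closedBall p 1 = Metric.closedBall ((g:E2) + p) 1 := by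
  ext z
  constructor
  · rintro ⟨y, hy, rfl⟩
    show dist ((g:E2) + y) ((g:E2) + p) ≤ 1
    rwa [dist_add_left]
  · intro hz
    refine ⟨z - (g:E2), ?_, by show (g:E2) + _ = z; abel⟩
    rw [Metric.mem_closedBall, dist_eq_norm, sub_sub]
    rwa [Metric.mem_closedBall, dist_eq_norm] at hz

instance : Countable ↥L.toAddSubgroup :=
  Countable.of_equiv ↥L (Equiv.subtypeEquivRight fun _ => Iff.rfl)

def Bp (p : E2) : Set E2 := ⋃ g : ↥L.toAddSubgroup, g +ᵥ Metric.closedBall p 1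

lemma aedisj (p : E2) : Pairwise fun g g' : ↥L.toAddSubgroup =>
    AEDisjoint volume ((g +ᵥ Metric.closedBall p 1) ∩ F)
      ((g' +ᵥ Metric.closedBall p 1) ∩ F) := by
  intro g g' hgg'
  refine measure_mono_null ?_ (Measure.addHaar_sphere volume ((g:E2) + p) (r := 1))
  rintro z ⟨⟨hz1, -⟩, ⟨hz2, -⟩⟩
  rw [vadd_cb] at hz1 hz2
  rw [Metric.mem_closedBall] at hz1 hz2
  have hd : 2 ≤ dist ((g:E2) + p) ((g':E2) + p) := by
    rw [dist_eq_norm, show ((g:E2) + p) - ((g':E2) + p) = (g:E2) - (g':E2) by abel]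
    exact norm_ge' (sub_mem g.2 g'.2)
      (sub_ne_zero.mpr (fun h => hgg' (Subtype.coe_injective h)))
  have h1 : dist z ((g:E2) + p) = 1 := by
    have := dist_triangle ((g:E2) + p) z ((g':E2) + p)
    rw [dist_comm ((g:E2) + p) z] at this
    linarith
  exact h1

lemma measBp (p : E2) : MeasurableSet (Bp p) :=
  MeasurableSet.iUnion fun g => by rw [vadd_cb]; exact Metric.isClosed_closedBall.measurableSet

lemma vol_diff (p : E2) :
    volume (F \ Bp p) = ENNReal.ofReal (2 * Real.sqrt 3 - Real.pi) := by
  have hFmeas : MeasurableSet F := ZSpan.fundamentalDomain_measurableSet bb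
  have hmeas : ∀ g : ↥L.toAddSubgroup, NullMeasurableSet ((g +ᵥ Metric.closedBall p 1) ∩ F) volume :=
    fun g => (by rw [vadd_cb]; exact Metric.isClosed_closedBall.measurableSet.inter hFmeas :
      MeasurableSet ((g +ᵥ Metric.closedBall p 1) ∩ F)).nullMeasurableSet
  have h1 : volume (Bp p ∩ F) = ENNReal.ofReal Real.pi := by
    rw [Bp, iUnion_inter, measure_iUnion₀ (aedisj p) hmeas,
      ← (ZSpan.isAddFundamentalDomain' bb volume).measure_eq_tsum (Metric.closedBall p 1),
      vol_ball]
  have h2 := measure_inter_add_diff (μ := volume) F (measBp p)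
  rw [inter_comm F, h1, vol_F] at h2
  have hs : (1.7:ℝ) ≤ Real.sqrt 3 := by
    rw [show (1.7:ℝ) = Real.sqrt (1.7^2) from (Real.sqrt_sq (by norm_num)).symm]
    exact Real.sqrt_le_sqrt (by norm_num)
  have hπ : Real.pi ≤ 2 * Real.sqrt 3 := by nlinarith [Real.pi_lt_d2]
  rw [show ENNReal.ofReal (2 * Real.sqrt 3)
      = ENNReal.ofReal Real.pi + ENNReal.ofReal (2 * Real.sqrt 3 - Real.pi) by
    rw [← ENNReal.ofReal_add Real.pi_nonneg (by linarith)]; ring_nf] at h2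
  exact (ENNReal.add_right_inj ENNReal.ofReal_ne_top).mp h2

end Stmt6Aux

open Stmt6Aux in
/-- If a finite set of points has the property that every translated hexagonal close packing
of unit disks misses some point of the set, then the set has at least 11 points. -/
theorem stmt_6 (P : Finset E2)
    (hP : ∀ t : E2, ∃ p ∈ P, ∀ q ∈ hexLattice 2, 1 < dist p (q + t)) :
    11 ≤ P.card := by
  classical
  have hcover : F ⊆ ⋃ p ∈ P, (F \ Bp p) := by
    intro t ht
    obtain ⟨p, hpP, hp⟩ := hP t
    refine mem_biUnion hpP ⟨ht, ?_⟩
    intro hmem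
    rw [Bp, mem_iUnion] at hmem
    obtain ⟨g, htg⟩ := hmem
    rw [vadd_cb, Metric.mem_closedBall] at htg
    have hq : -(g:E2) ∈ hexLattice 2 := by
      rw [hex_eq]; exact neg_mem g.2
    have := hp _ hq
    rw [show -(g:E2) + t = t - (g:E2) by abel, dist_comm, dist_eq_norm,
      show t - (g:E2) - p = t - ((g:E2) + p) by abel, ← dist_eq_norm] at this
    linarith
  have hle : volume F ≤ ∑ p ∈ P, volume (F \ Bp p) :=
    (measure_mono hcover).trans (measure_biUnion_finset_le P _)
  have hsum : ∑ p ∈ P, volume (F \ Bp p)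
      = (P.card : ℝ≥0∞) * ENNReal.ofReal (2 * Real.sqrt 3 - Real.pi) := by
    simp [vol_diff, Finset.sum_const, nsmul_eq_mul]
  rw [vol_F, hsum, ← ENNReal.ofReal_natCast,
    ← ENNReal.ofReal_mul (by positivity)] at hle
  have hs : (1.7:ℝ) ≤ Real.sqrt 3 := by
    rw [show (1.7:ℝ) = Real.sqrt (1.7^2) from (Real.sqrt_sq (by norm_num)).symm]
    exact Real.sqrt_le_sqrt (by norm_num)
  have hπ : Real.pi ≤ 2 * Real.sqrt 3 := by nlinarith [Real.pi_lt_d2]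
  have hreal : 2 * Real.sqrt 3 ≤ (P.card : ℝ) * (2 * Real.sqrt 3 - Real.pi) :=
    (ENNReal.ofReal_le_ofReal_iff (mul_nonneg (Nat.cast_nonneg _) (by linarith))).mp hle
  by_contra hcard
  push_neg at hcard
  have hc10 : (P.card : ℝ) ≤ 10 := by exact_mod_cast Nat.lt_succ_iff.mp hcard
  have h10 : 2 * Real.sqrt 3 ≤ 10 * (2 * Real.sqrt 3 - Real.pi) := by
    refine hreal.trans (mul_le_mul_of_nonneg_right hc10 (by linarith))
  have hs2 : Real.sqrt 3 < 1.7320509 := by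
    rw [show (1.7320509:ℝ) = Real.sqrt (1.7320509^2) from (Real.sqrt_sq (by norm_num)).symm]
    exact Real.sqrt_lt_sqrt (by norm_num) (by norm_num)
  linarith [Real.pi_gt_d6]
end
end

section
/- Let D and D' be two non-overlapping unit disks with centers at distance 2 + d apart, where 0 ≤ d < 2r and r = 2/√3 − 1. Then the set of points p on the circle of radius 1 + r concentric with D (positions of hole centers tangent to D) that are at distance less than 1 + r from the center of D' forms an open arc whose central angle is strictly less than or equal to 2π/6, with equality exactly when d = 0. -/
noncomputable section

lemma arccos_anti {x y : ℝ} (h : x ≤ y) : Real.arccos y ≤ Real.arccos x := by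
  simp only [Real.arccos]
  exact sub_le_sub_left (Real.monotone_arcsin h) _

/-- For two non-overlapping unit disks with centers at distance `2 + d`, `0 ≤ d < 2r`,
the positions on the circle of radius `1 + r` around the first center that are within
distance `1 + r` of the second center form an open arc of central angle
`2·arccos((2+d)/(2(1+r))) ≤ 2π/6`, with equality exactly when `d = 0`. -/
theorem stmt_9 (r d : ℝ) (hr : r = 2 / Real.sqrt 3 - 1)
    (hd0 : 0 ≤ d) (hd2 : d < 2 * r)
    (c c' : E2) (hcc' : dist c c' = 2 + d) :
    (∀ p : E2, dist p c = 1 + r →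
      (dist p c' < 1 + r ↔
        EuclideanGeometry.angle p c c' < Real.arccos ((2 + d) / (2 * (1 + r))))) ∧
    2 * Real.arccos ((2 + d) / (2 * (1 + r))) ≤ 2 * Real.pi / 6 ∧
    (2 * Real.arccos ((2 + d) / (2 * (1 + r))) = 2 * Real.pi / 6 ↔ d = 0) := by
  have hs0 : (0:ℝ) < Real.sqrt 3 := Real.sqrt_pos.mpr (by norm_num)
  have hs2 : Real.sqrt 3 ^ 2 = 3 := Real.sq_sqrt (by norm_num)
  have hs1 : (1:ℝ) < Real.sqrt 3 := by nlinarith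
  have hs3 : Real.sqrt 3 < 2 := by nlinarith
  have h1r : 1 + r = 2 / Real.sqrt 3 := by rw [hr]; ring
  have h1rpos : (0:ℝ) < 1 + r := by rw [h1r]; positivity
  set t : ℝ := (2 + d) / (2 * (1 + r)) with ht
  have ht' : t = (2 + d) * Real.sqrt 3 / 4 := by
    rw [ht, h1r]; field_simp; ring
  have htlo : Real.sqrt 3 / 2 ≤ t := by
    rw [ht']; nlinarith
  have h2r3 : 2 * r * Real.sqrt 3 = 4 - 2 * Real.sqrt 3 := by
    rw [hr]; field_simp; ring
  have hthi : t < 1 := by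
    rw [ht']
    have hd3 : d * Real.sqrt 3 < 2 * r * Real.sqrt 3 :=
      mul_lt_mul_of_pos_right hd2 hs0
    rw [h2r3] at hd3
    linarith
  have ht1 : t ≤ 1 := hthi.le
  have ht0 : (-1:ℝ) ≤ t := by nlinarith
  have harc6 : Real.arccos (Real.sqrt 3 / 2) = Real.pi / 6 := by
    rw [← Real.cos_pi_div_six, Real.arccos_cos (by positivity)
      (by linarith [Real.pi_pos])]
  have harcle : Real.arccos t ≤ Real.pi / 6 := harc6 ▸ arccos_anti htlo
  have h2d : (0:ℝ) < 2 + d := by linarith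
  refine ⟨?_, by linarith, ?_⟩
  · intro p hp
    have hlc := EuclideanGeometry.law_cos p c c'
    rw [hp, show dist c' c = 2 + d from (dist_comm c' c) ▸ hcc'] at hlc
    set θ := EuclideanGeometry.angle p c c' with hθ
    set x := dist p c' with hx
    have hx0 : 0 ≤ x := dist_nonneg
    have hθ0 : 0 ≤ θ := EuclideanGeometry.angle_nonneg p c c'
    have hθπ : θ ≤ Real.pi := EuclideanGeometry.angle_le_pi p c c'
    have key : x < 1 + r ↔ t < Real.cos θ := by
      constructor
      · intro h
        have hsq : x * x < (1 + r) * (1 + r) := mul_self_lt_mul_self hx0 h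
        rw [ht, div_lt_iff₀ (by positivity)]
        nlinarith
      · intro h
        rw [ht, div_lt_iff₀ (by positivity)] at h
        nlinarith
    rw [key]
    constructor
    · intro h
      by_contra hcon
      push_neg at hcon
      have := Real.cos_le_cos_of_nonneg_of_le_pi (Real.arccos_nonneg t) hθπ hcon
      rw [Real.cos_arccos ht0 ht1] at this
      linarith
    · intro h
      have := Real.cos_lt_cos_of_nonneg_of_le_pi hθ0 (Real.arccos_le_pi t) h
      rwa [Real.cos_arccos ht0 ht1] at this
  · constructor
    · intro h
      have harceq : Real.arccos t = Real.pi / 6 := by linarith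
      have hteq : t = Real.sqrt 3 / 2 := by
        have := congrArg Real.cos harceq
        rwa [Real.cos_arccos ht0 ht1, Real.cos_pi_div_six] at this
      rw [ht'] at hteq
      nlinarith
    · intro h
      subst h
      have : t = Real.sqrt 3 / 2 := by rw [ht']; ring
      rw [this, harc6]; ring
end
end

section
/- A hole cannot be simultaneously tangent to three pairwise non-overlapping unit disks unless the three unit disks are mutually tangent: if a disk of radius r = 2/√3 − 1 is tangent to three unit disks with pairwise disjoint interiors, then the three unit disk centers form an equilateral triangle of side 2. -/
noncomputable section

/-- A hole (disk of radius `r = 2/√3 − 1`) tangent to three pairwise non-overlapping unit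
disks forces the three unit disks to be mutually tangent: their centers form an
equilateral triangle of side 2. -/
theorem stmt_10 (c : Fin 3 → E2) (q : E2)
    (hpack : ∀ i j, i ≠ j → 2 ≤ dist (c i) (c j))
    (htan : ∀ i, dist q (c i) = 1 + (2 / Real.sqrt 3 - 1)) :
    ∀ i j, i ≠ j → dist (c i) (c j) = 2 := by
  have hsq3 : (Real.sqrt 3) ^ 2 = 3 := Real.sq_sqrt (by norm_num)
  have h3 : (0:ℝ) < Real.sqrt 3 := Real.sqrt_pos.mpr (by norm_num)
  -- norms of v i := c i - q
  have hn : ∀ i, ‖c i - q‖ ^ 2 = 4 / 3 := by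
    intro i
    have h := htan i
    have : dist (c i) q = 2 / Real.sqrt 3 := by rw [dist_comm, h]; ring
    rw [dist_eq_norm] at this
    rw [this, div_pow, hsq3]; norm_num
  -- expansion of pairwise distances
  have hexp : ∀ i j, dist (c i) (c j) ^ 2 =
      8 / 3 - 2 * (inner ℝ (c i - q) (c j - q) : ℝ) := by
    intro i j
    have e : c i - c j = (c i - q) - (c j - q) := by abel
    rw [dist_eq_norm, e, norm_sub_sq_real, hn i, hn j]; ring
  -- each pairwise inner product ≤ -2/3
  have key : ∀ i j, i ≠ j → (inner ℝ (c i - q) (c j - q) : ℝ) ≤ -2/3 := by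
    intro i j hij
    have h2 := hpack i j hij
    have h4 : (4:ℝ) ≤ dist (c i) (c j) ^ 2 := by nlinarith [dist_nonneg (x := c i) (y := c j)]
    rw [hexp i j] at h4
    linarith
  set a : ℝ := inner ℝ (c 0 - q) (c 1 - q) with ha
  set b : ℝ := inner ℝ (c 0 - q) (c 2 - q) with hb
  set d : ℝ := inner ℝ (c 1 - q) (c 2 - q) with hd
  have hsum : 0 ≤ 4 + 2 * (a + b + d) := by
    have h0 : (0:ℝ) ≤ ‖(c 0 - q) + (c 1 - q) + (c 2 - q)‖ ^ 2 := sq_nonneg _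
    have hE : ‖(c 0 - q) + (c 1 - q) + (c 2 - q)‖ ^ 2
        = ‖c 0 - q‖^2 + ‖c 1 - q‖^2 + ‖c 2 - q‖^2 + 2 * (a + b + d) := by
      rw [ha, hb, hd]
      simp only [← real_inner_self_eq_norm_sq, inner_add_left, inner_add_right]
      rw [real_inner_comm (c 1 - q) (c 0 - q), real_inner_comm (c 2 - q) (c 0 - q),
        real_inner_comm (c 2 - q) (c 1 - q)]
      ring
    rw [hE, hn 0, hn 1, hn 2] at h0
    linarith
  have ka : a ≤ -2/3 := key 0 1 (by decide)
  have kb : b ≤ -2/3 := key 0 2 (by decide)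
  have kd : d ≤ -2/3 := key 1 2 (by decide)
  have ea : a = -2/3 := by linarith
  have eb : b = -2/3 := by linarith
  have ed : d = -2/3 := by linarith
  have conv : ∀ x y : E2, dist x y ^ 2 = 4 → dist x y = 2 := by
    intro x y h
    nlinarith [dist_nonneg (x := x) (y := y)]
  have d01 : dist (c 0) (c 1) = 2 := conv _ _ (by rw [hexp, ← ha, ea]; ring)
  have d02 : dist (c 0) (c 2) = 2 := conv _ _ (by rw [hexp, ← hb, eb]; ring)
  have d12 : dist (c 1) (c 2) = 2 := conv _ _ (by rw [hexp, ← hd, ed]; ring)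
  have d10 : dist (c 1) (c 0) = 2 := by rw [dist_comm]; exact d01
  have d20 : dist (c 2) (c 0) = 2 := by rw [dist_comm]; exact d02
  have d21 : dist (c 2) (c 1) = 2 := by rw [dist_comm]; exact d12
  intro i j hij
  fin_cases i <;> fin_cases j <;>
    first
      | exact absurd rfl hij
      | exact d01 | exact d02 | exact d10 | exact d12 | exact d20 | exact d21
end
end

section
/- In any packing of unit disks in the plane (disks with pairwise disjoint interiors), for any disk D of the packing and any closed arc A of central angle 2π/6 on the circle of radius 1 + r concentric with D (r = 2/√3 − 1), there exists a point c ∈ A such that the closed disk of radius r centered at c is disjoint from the interiors of all disks of the packing. -/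
noncomputable section

local notation "⟪" x ", " y "⟫" => @inner ℝ _ _ x y

/-- Among three unit vectors, some pair has inner product `≥ -1/2`. -/
lemma unit_inner_pair (u v w : E2) (hu : ‖u‖ = 1) (hv : ‖v‖ = 1) (hw : ‖w‖ = 1) :
    -(1/2) ≤ ⟪u, v⟫ ∨ -(1/2) ≤ ⟪u, w⟫ ∨ -(1/2) ≤ ⟪v, w⟫ := by
  by_contra h
  push_neg at h
  obtain ⟨h1, h2, h3⟩ := h
  have e1 : ‖u + v + w‖ ^ 2 = ‖u + v‖ ^ 2 + 2 * ⟪u + v, w⟫ + ‖w‖ ^ 2 := norm_add_sq_real _ _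
  have e2 : ‖u + v‖ ^ 2 = ‖u‖ ^ 2 + 2 * ⟪u, v⟫ + ‖v‖ ^ 2 := norm_add_sq_real _ _
  have e3 : ⟪u + v, w⟫ = ⟪u, w⟫ + ⟪v, w⟫ := inner_add_left _ _ _
  nlinarith [sq_nonneg ‖u + v + w‖]

lemma pair_contra (R : ℝ) (hR0 : 0 < R) (hRsq : 3 * R ^ 2 = 4)
    (a b : E2) (ha0 : a ≠ 0) (hb0 : b ≠ 0) (ha : ‖a‖ ≤ R) (hb : ‖b‖ < R)
    (hin : -(1/2) ≤ ⟪‖a‖⁻¹ • a, ‖b‖⁻¹ • b⟫) (h2 : 2 ≤ ‖a - b‖) : False := by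
  have hna : 0 < ‖a‖ := norm_pos_iff.mpr ha0
  have hnb : 0 < ‖b‖ := norm_pos_iff.mpr hb0
  rw [real_inner_smul_left, real_inner_smul_right] at hin
  have hi : -(‖a‖ * ‖b‖ / 2) ≤ ⟪a, b⟫ := by
    have h' := mul_le_mul_of_nonneg_left hin (mul_pos hna hnb).le
    have e : ‖a‖ * ‖b‖ * (‖a‖⁻¹ * (‖b‖⁻¹ * ⟪a, b⟫)) = ⟪a, b⟫ := by
      field_simp
    nlinarith [h']
  have key : ‖a - b‖ ^ 2 ≤ ‖a‖ ^ 2 + ‖b‖ ^ 2 + ‖a‖ * ‖b‖ := by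
    rw [norm_sub_sq_real]; nlinarith
  nlinarith [mul_le_mul ha hb.le hnb.le hR0.le]

/-- Three points pairwise at distance `≥ 2` cannot all lie within `R = 2/√3` of a common
point `p`, with strict inequality for two of them. -/
lemma three_in_small_ball (R : ℝ) (hR0 : 0 < R) (hR2 : R < 2) (hRsq : 3 * R ^ 2 = 4)
    (p x y z : E2) (hx : dist p x ≤ R) (hy : dist p y < R) (hz : dist p z < R)
    (hxy : 2 ≤ dist x y) (hxz : 2 ≤ dist x z) (hyz : 2 ≤ dist y z) : False := by
  set u := x - p with hu
  set v := y - p with hv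
  set w := z - p with hw
  have hnu : ‖u‖ ≤ R := by rw [hu, ← dist_eq_norm, dist_comm]; exact hx
  have hnv : ‖v‖ < R := by rw [hv, ← dist_eq_norm, dist_comm]; exact hy
  have hnw : ‖w‖ < R := by rw [hw, ← dist_eq_norm, dist_comm]; exact hz
  have duv : dist x y = ‖u - v‖ := by rw [dist_eq_norm]; congr 1; rw [hu, hv]; abel
  have duw : dist x z = ‖u - w‖ := by rw [dist_eq_norm]; congr 1; rw [hu, hw]; abel
  have dvw : dist y z = ‖v - w‖ := by rw [dist_eq_norm]; congr 1; rw [hv, hw]; abel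
  have hu0 : u ≠ 0 := by
    intro h
    rw [duv, h, zero_sub, norm_neg] at hxy
    linarith
  have hv0 : v ≠ 0 := by
    intro h
    rw [duv, h, sub_zero] at hxy
    linarith
  have hw0 : w ≠ 0 := by
    intro h
    rw [duw, h, sub_zero] at hxz
    linarith
  have h1 : ‖‖u‖⁻¹ • u‖ = 1 := norm_smul_inv_norm hu0
  have h2 : ‖‖v‖⁻¹ • v‖ = 1 := norm_smul_inv_norm hv0
  have h3 : ‖‖w‖⁻¹ • w‖ = 1 := norm_smul_inv_norm hw0
  rcases unit_inner_pair _ _ _ h1 h2 h3 with h | h | h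
  · exact pair_contra R hR0 hRsq u v hu0 hv0 hnu hnv h (by rw [← duv]; exact hxy)
  · exact pair_contra R hR0 hRsq u w hu0 hw0 hnu hnw h (by rw [← duw]; exact hxz)
  · exact pair_contra R hR0 hRsq v w hv0 hw0 hnv.le hnw h (by rw [← dvw]; exact hyz)

set_option maxHeartbeats 1000000 in
/-- Lens lemma: if `q1 q2` are at distance `R = 2/√3` and `x, y` are both within `R` of both
`q1` and `q2` (strictly for `y`), then `dist x y < 2`. -/
lemma lens_lemma (R : ℝ) (hR0 : 0 ≤ R) (hRsq : 3 * R ^ 2 = 4) (q1 q2 x y : E2)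
    (h12 : ‖q1 - q2‖ = R) (hx1 : dist x q1 ≤ R) (hx2 : dist x q2 ≤ R)
    (hy1 : dist y q1 < R) (hy2 : dist y q2 < R) : dist x y < 2 := by
  set a := x - q1 with ha
  set b := x - q2 with hb
  set a' := y - q1 with ha'
  set b' := y - q2 with hb'
  have hna : ‖a‖ ≤ R := by rw [ha, ← dist_eq_norm]; exact hx1
  have hnb : ‖b‖ ≤ R := by rw [hb, ← dist_eq_norm]; exact hx2
  have hna' : ‖a'‖ < R := by rw [ha', ← dist_eq_norm]; exact hy1
  have hnb' : ‖b'‖ < R := by rw [hb', ← dist_eq_norm]; exact hy2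
  have hab : ‖a - b‖ = R := by
    have : a - b = q2 - q1 := by rw [ha, hb]; abel
    rw [this, norm_sub_rev]; exact h12
  have hab' : ‖a' - b'‖ = R := by
    have : a' - b' = q2 - q1 := by rw [ha', hb']; abel
    rw [this, norm_sub_rev]; exact h12
  have hpar : ‖a + b‖ * ‖a + b‖ + ‖a - b‖ * ‖a - b‖
      = 2 * (‖a‖ * ‖a‖ + ‖b‖ * ‖b‖) := by
    have h := parallelogram_law_with_norm ℝ a b; simp only [sq] at h; exact h
  have hpar' : ‖a' + b'‖ * ‖a' + b'‖ + ‖a' - b'‖ * ‖a' - b'‖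
      = 2 * (‖a'‖ * ‖a'‖ + ‖b'‖ * ‖b'‖) := by
    have h := parallelogram_law_with_norm ℝ a' b'; simp only [sq] at h; exact h
  have hs : ‖a + b‖ ≤ 2 := by
    nlinarith [norm_nonneg (a + b), norm_nonneg a, norm_nonneg b, hab]
  have hs' : ‖a' + b'‖ < 2 := by
    nlinarith [norm_nonneg (a' + b'), norm_nonneg a', norm_nonneg b', hab']
  have hxy : x - y = (2⁻¹ : ℝ) • ((a + b) - (a' + b')) := by
    rw [ha, hb, ha', hb']; module
  rw [dist_eq_norm, hxy, norm_smul]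
  have := norm_sub_le (a + b) (a' + b')
  rw [Real.norm_eq_abs]
  rw [abs_of_pos (by norm_num : (0:ℝ) < 2⁻¹)]
  nlinarith [norm_nonneg ((a + b) - (a' + b'))]

lemma pt_sub (x y x' y' : ℝ) : (pt x y - pt x' y' : E2) = pt (x - x') (y - y') := by
  ext i
  rw [PiLp.sub_apply]
  fin_cases i <;> simp [pt]

lemma pt_norm_sq (x y : ℝ) : ‖(pt x y : E2)‖ ^ 2 = x ^ 2 + y ^ 2 := by
  rw [EuclideanSpace.norm_eq]
  rw [Real.sq_sqrt (by positivity)]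
  simp [pt, Fin.sum_univ_two, sq_abs]

lemma pt_norm_one (θ : ℝ) : ‖(pt (Real.cos θ) (Real.sin θ) : E2)‖ = 1 := by
  have h := pt_norm_sq (Real.cos θ) (Real.sin θ)
  rw [Real.cos_sq_add_sin_sq] at h
  nlinarith [norm_nonneg (pt (Real.cos θ) (Real.sin θ) : E2)]

lemma pt_cont : Continuous fun θ : ℝ => (pt (Real.cos θ) (Real.sin θ) : E2) := by
  have h : ∀ θ : ℝ, (pt (Real.cos θ) (Real.sin θ) : E2)
      = Real.cos θ • (pt 1 0 : E2) + Real.sin θ • (pt 0 1 : E2) := by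
    intro θ
    ext i
    rw [PiLp.add_apply, PiLp.smul_apply, PiLp.smul_apply]
    fin_cases i <;> simp [pt]
  simp only [h]
  exact (Real.continuous_cos.smul continuous_const).add
    (Real.continuous_sin.smul continuous_const)

/-- In any packing of unit disks, along any closed arc of central angle `2π/6` on the circle
of radius `1 + r` around one of the packed disks (`r = 2/√3 − 1`) there is a point `c` such
that the hole (closed disk of radius `r`) centered at `c` is disjoint from the interiors of
all disks of the packing. -/
theorem stmt_12 (r : ℝ) (hr : r = 2 / Real.sqrt 3 - 1)
    (ι : Type) (c : ι → E2)
    (hpack : Pairwise fun i j => 2 ≤ dist (c i) (c j))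
    (i₀ : ι) (α : ℝ) :
    ∃ θ ∈ Set.Icc α (α + 2 * Real.pi / 6),
      ∀ i, 1 + r ≤ dist (c i₀ + (1 + r) • pt (Real.cos θ) (Real.sin θ)) (c i) := by
  have h3 : (0:ℝ) < Real.sqrt 3 := Real.sqrt_pos.mpr (by norm_num)
  have h3sq : Real.sqrt 3 ^ 2 = 3 := Real.sq_sqrt (by norm_num)
  set R := 1 + r with hRdef
  have hRval : R = 2 / Real.sqrt 3 := by rw [hRdef, hr]; ring
  have hR0 : 0 < R := by rw [hRval]; positivity
  have hRsq : 3 * R ^ 2 = 4 := by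
    rw [hRval, div_pow, h3sq]; norm_num
  have hR2 : R < 2 := by nlinarith
  set f : ℝ → E2 := fun θ => c i₀ + R • pt (Real.cos θ) (Real.sin θ) with hf
  have hdist0 : ∀ θ, dist (f θ) (c i₀) = R := by
    intro θ
    rw [hf]
    simp only [dist_eq_norm, add_sub_cancel_left]
    rw [norm_smul, pt_norm_one, Real.norm_eq_abs, abs_of_pos hR0, mul_one]
  have hcont : Continuous f := by
    rw [hf]
    exact continuous_const.add (pt_cont.const_smul R)
  by_contra hcon
  push_neg at hcon
  have hcon' : ∀ θ ∈ Set.Icc α (α + 2 * Real.pi / 6), ∃ i, dist (f θ) (c i) < R := hcon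
  set U : ι → Set ℝ := fun i => {θ | dist (f θ) (c i) < R} with hU
  have hopen : ∀ i, IsOpen (U i) :=
    fun i => isOpen_lt (hcont.dist continuous_const) continuous_const
  have hU0 : ∀ θ, θ ∉ U i₀ := by
    intro θ h
    exact absurd (hdist0 θ) (ne_of_lt h)
  have hdisj : ∀ i j, i ≠ j → Disjoint (U i) (U j) := by
    intro i j hij
    rw [Set.disjoint_left]
    intro θ hi hj
    have hii0 : i ≠ i₀ := fun h => hU0 θ (h ▸ hi)
    have hjj0 : j ≠ i₀ := fun h => hU0 θ (h ▸ hj)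
    exact three_in_small_ball R hR0 hR2 hRsq (f θ) (c i₀) (c i) (c j)
      (le_of_eq (hdist0 θ)) hi hj (hpack hii0.symm) (hpack hjj0.symm) (hpack hij)
  have hIU : Set.Icc α (α + 2 * Real.pi / 6) ⊆ ⋃ i, U i := by
    intro θ hθ
    obtain ⟨i, hi⟩ := hcon' θ hθ
    exact Set.mem_iUnion.mpr ⟨i, hi⟩
  have hαmem : α ∈ Set.Icc α (α + 2 * Real.pi / 6) :=
    ⟨le_refl α, by nlinarith [Real.pi_pos]⟩
  obtain ⟨i1, hi1⟩ : ∃ i, α ∈ U i := Set.mem_iUnion.mp (hIU hαmem)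
  have hi10 : i1 ≠ i₀ := fun h => hU0 α (h ▸ hi1)
  have hdisj2 : Disjoint (U i1) (⋃ j, ⋃ _ : j ≠ i1, U j) := by
    rw [Set.disjoint_iUnion_right]
    intro j
    rw [Set.disjoint_iUnion_right]
    intro hj
    exact hdisj i1 j (Ne.symm hj)
  have hcover : Set.Icc α (α + 2 * Real.pi / 6) ⊆ U i1 ∪ ⋃ j, ⋃ _ : j ≠ i1, U j := by
    intro θ hθ
    obtain ⟨i, hi⟩ := hcon' θ hθ
    by_cases h : i = i1
    · exact Or.inl (h ▸ hi)
    · exact Or.inr (Set.mem_iUnion.mpr ⟨i, Set.mem_iUnion.mpr ⟨h, hi⟩⟩)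
  have hIu : Set.Icc α (α + 2 * Real.pi / 6) ⊆ U i1 :=
    IsPreconnected.subset_left_of_subset_union (hopen i1)
      (isOpen_iUnion fun j => isOpen_iUnion fun _ => hopen j) hdisj2 hcover
      ⟨α, hαmem, hi1⟩ isPreconnected_Icc
  have hend : α + 2 * Real.pi / 6 ∈ U i1 :=
    hIu ⟨by nlinarith [Real.pi_pos], le_refl _⟩
  -- chord length between the two endpoints is exactly R
  have hchord : ‖f α - f (α + 2 * Real.pi / 6)‖ = R := by
    set β := α + 2 * Real.pi / 6 with hβ
    have hsub : f α - f β = R • (pt (Real.cos α - Real.cos β) (Real.sin α - Real.sin β)) := by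
      rw [hf]
      simp only
      rw [add_sub_add_left_eq_sub, ← smul_sub, pt_sub]
    rw [hsub, norm_smul, Real.norm_eq_abs, abs_of_pos hR0]
    have hcosβα : Real.cos (β - α) = 1 / 2 := by
      have : β - α = Real.pi / 3 := by rw [hβ]; ring
      rw [this, Real.cos_pi_div_three]
    have hexp : Real.cos β * Real.cos α + Real.sin β * Real.sin α = 1 / 2 := by
      rw [← Real.cos_sub]; exact hcosβα
    have hn : ‖(pt (Real.cos α - Real.cos β) (Real.sin α - Real.sin β) : E2)‖ ^ 2 = 1 := by
      rw [pt_norm_sq]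
      nlinarith [Real.sin_sq_add_cos_sq α, Real.sin_sq_add_cos_sq β]
    have : ‖(pt (Real.cos α - Real.cos β) (Real.sin α - Real.sin β) : E2)‖ = 1 := by
      nlinarith [norm_nonneg (pt (Real.cos α - Real.cos β) (Real.sin α - Real.sin β) : E2)]
    rw [this, mul_one]
  have hfar := lens_lemma R hR0.le hRsq (f α) (f (α + 2 * Real.pi / 6)) (c i₀) (c i1)
    hchord
    (le_of_eq ((dist_comm (c i₀) (f α)) ▸ hdist0 α))
    (le_of_eq ((dist_comm (c i₀) (f (α + 2 * Real.pi / 6))) ▸ hdist0 _))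
    ((dist_comm (c i1) (f α)) ▸ hi1)
    ((dist_comm (c i1) (f (α + 2 * Real.pi / 6))) ▸ hend)
  exact absurd (hpack (Ne.symm hi10)) (not_le.mpr hfar)
end
end

section
/- Let R be the closed rectangle [0, 2+4r] × [0, 1+3r] with r = 2/√3 − 1. In any packing of unit disks in the plane, there exists a hole (a closed disk of radius r disjoint from the interiors of all packing disks) contained in R. -/
set_option maxHeartbeats 1000000

noncomputable section

open Real
open scoped RealInnerProductSpace

section Claims

variable {F : Type*} [NormedAddCommGroup F] [InnerProductSpace ℝ F]

lemma scalarA (α β h k : ℝ) (hh : 0 ≤ h) (hk : 0 ≤ k)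
    (hA : 4 ≤ α^2 * (4/3) + h^2) (hB : (α-1)^2 * (4/3) + h^2 < 4/3)
    (hC : 4 ≤ β^2 * (4/3) + k^2) (hD : (β-1)^2 * (4/3) + k^2 < 4/3)
    (h5 : 4 ≤ (α-β)^2 * (4/3) + (h+k)^2) : False := by
  have hu : 1/2 < α - 1 := by nlinarith
  have hv : 1/2 < β - 1 := by nlinarith
  have hu2 : h^2 < (4/3) * (1 - (α-1)^2) := by nlinarith
  have hv2 : k^2 < (4/3) * (1 - (β-1)^2) := by nlinarith
  have huvp : (0:ℝ) < (α-1) * (β-1) := mul_pos (by linarith) (by linarith)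
  have hX : 4/3 + (8/3) * ((α-1)*(β-1)) < 2 * (h*k) := by nlinarith
  have huv : (0:ℝ) ≤ 4/3 + (8/3) * ((α-1)*(β-1)) := by nlinarith [huvp]
  have hsq := mul_lt_mul'' hX hX huv huv
  have hkk := mul_lt_mul'' hu2 hv2 (sq_nonneg h) (sq_nonneg k)
  nlinarith [hsq, hkk, huvp]


lemma claimA (P Y Z : F) (hP : ‖P‖^2 = 4/3)
    (hY : 2 ≤ ‖Y‖) (hZ : 2 ≤ ‖Z‖) (hYZ : 2 ≤ ‖Y - Z‖)
    (hPY : ‖Y - P‖^2 < 4/3) (hPZ : ‖Z - P‖^2 < 4/3) : False := by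
  have hPP : ⟪P, P⟫ = 4/3 := by
    rw [real_inner_self_eq_norm_sq, hP]
  set α : ℝ := ⟪P, Y⟫ / (4/3) with hα
  set β : ℝ := ⟪P, Z⟫ / (4/3) with hβ
  set Y' := Y - α • P with hY'
  set Z' := Z - β • P with hZ'
  have hoY : ⟪P, Y'⟫ = 0 := by
    rw [hY', inner_sub_right, real_inner_smul_right, hPP, hα]; ring
  have hoZ : ⟪P, Z'⟫ = 0 := by
    rw [hZ', inner_sub_right, real_inner_smul_right, hPP, hβ]; ring
  have key : ∀ (a : ℝ) (W : F), ⟪P, W⟫ = 0 → ‖a • P + W‖^2 = a^2 * (4/3) + ‖W‖^2 := by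
    intro a W hW
    have h1 := norm_add_sq_real (a • P) W
    have h2 : ⟪a • P, W⟫ = a * ⟪P, W⟫ := real_inner_smul_left _ _ _
    have h3 : ‖a • P‖ = |a| * ‖P‖ := norm_smul _ _
    have h4 : (|a| * ‖P‖)^2 = a^2 * (4/3) := by rw [mul_pow, sq_abs, hP]
    rw [h2, hW, h3, h4] at h1; linarith
  have eY : Y = α • P + Y' := by rw [hY']; abel
  have eZ : Z = β • P + Z' := by rw [hZ']; abel
  have e1 : ‖Y‖^2 = α^2 * (4/3) + ‖Y'‖^2 := by rw [eY, key _ _ hoY]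
  have e2 : ‖Y - P‖^2 = (α-1)^2 * (4/3) + ‖Y'‖^2 := by
    have h : Y - P = (α-1) • P + Y' := by rw [hY', sub_smul, one_smul]; abel
    rw [h, key _ _ hoY]
  have e3 : ‖Z‖^2 = β^2 * (4/3) + ‖Z'‖^2 := by rw [eZ, key _ _ hoZ]
  have e4 : ‖Z - P‖^2 = (β-1)^2 * (4/3) + ‖Z'‖^2 := by
    have h : Z - P = (β-1) • P + Z' := by rw [hZ', sub_smul, one_smul]; abel
    rw [h, key _ _ hoZ]
  have e5 : ‖Y - Z‖^2 = (α-β)^2 * (4/3) + ‖Y' - Z'‖^2 := by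
    have h : Y - Z = (α-β) • P + (Y' - Z') := by rw [hY', hZ', sub_smul]; abel
    have ho : ⟪P, Y' - Z'⟫ = 0 := by rw [inner_sub_right, hoY, hoZ]; ring
    rw [h, key _ _ ho]
  have htr : ‖Y' - Z'‖^2 ≤ (‖Y'‖ + ‖Z'‖)^2 :=
    pow_le_pow_left₀ (norm_nonneg _) (norm_sub_le _ _) 2
  have hY4 : (4:ℝ) ≤ ‖Y‖^2 := by
    calc (4:ℝ) = 2^2 := by norm_num
    _ ≤ ‖Y‖^2 := pow_le_pow_left₀ (by norm_num) hY 2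
  have hZ4 : (4:ℝ) ≤ ‖Z‖^2 := by
    calc (4:ℝ) = 2^2 := by norm_num
    _ ≤ ‖Z‖^2 := pow_le_pow_left₀ (by norm_num) hZ 2
  have hYZ4 : (4:ℝ) ≤ ‖Y - Z‖^2 := by
    calc (4:ℝ) = 2^2 := by norm_num
    _ ≤ ‖Y - Z‖^2 := pow_le_pow_left₀ (by norm_num) hYZ 2
  refine scalarA α β ‖Y'‖ ‖Z'‖ (norm_nonneg _) (norm_nonneg _) ?_ ?_ ?_ ?_ ?_
  · linarith
  · rw [← e2]; exact hPY
  · linarith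
  · rw [← e4]; exact hPZ
  · linarith


/-- Claim B: a point at distance ≥2 from x cannot strictly block two tangent-hole
positions that are R apart (R = 2/√3). Stated with vectors based at x. -/
lemma claimB (P1 P2 Y : F) (hP1 : ‖P1‖^2 = 4/3) (hP2 : ‖P2‖^2 = 4/3)
    (h12 : ‖P1 - P2‖^2 = 4/3) (hY : 2 ≤ ‖Y‖)
    (hY1 : ‖Y - P1‖^2 < 4/3) (hY2 : ‖Y - P2‖^2 < 4/3) : False := by
  have e1 := norm_sub_sq_real Y P1
  have e2 := norm_sub_sq_real Y P2
  have e3 := norm_sub_sq_real P1 P2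
  have e4 := norm_add_sq_real P1 P2
  have hsum : ‖P1 + P2‖^2 = 4 := by nlinarith
  have hPn : ‖P1 + P2‖ = 2 := by nlinarith [norm_nonneg (P1 + P2)]
  have hCS : ⟪Y, P1 + P2⟫ ≤ ‖Y‖ * ‖P1 + P2‖ := real_inner_le_norm _ _
  have hadd : ⟪Y, P1 + P2⟫ = ⟪Y, P1⟫ + ⟪Y, P2⟫ := inner_add_right _ _ _
  nlinarith


end Claims

lemma dist_pt (a b : ℝ) (y : E2) :
    dist (pt a b) y = Real.sqrt ((a - y 0)^2 + (b - y 1)^2) := by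
  rw [EuclideanSpace.dist_eq, Fin.sum_univ_two]
  simp [pt, Real.dist_eq, sq_abs]


lemma adjacent_hole (R : ℝ) (hR0 : 0 < R) (hR2 : R^2 = 4/3)
    (ι : Type) (c : ι → E2)
    (hpack : Pairwise fun i j => 2 ≤ dist (c i) (c j)) (i0 : ι) (θ1 : ℝ) :
    ∃ θ ∈ Set.Icc θ1 (θ1 + π/3),
      ∀ i, R ≤ dist (pt (c i0 0 + R * Real.cos θ) (c i0 1 + R * Real.sin θ)) (c i) := by
  set px : ℝ → E2 := fun θ => pt (c i0 0 + R * Real.cos θ) (c i0 1 + R * Real.sin θ) with hpx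
  have hcont : Continuous px := by
    have h : Continuous fun θ => (![c i0 0 + R * Real.cos θ, c i0 1 + R * Real.sin θ] : Fin 2 → ℝ) := by
      apply continuous_pi; intro i; fin_cases i <;> simp <;> fun_prop
    exact (PiLp.continuous_toLp 2 (fun _ : Fin 2 => ℝ)).comp h
  have hdx : ∀ θ, dist (px θ) (c i0) = R := by
    intro θ
    rw [hpx]
    simp only []
    rw [dist_pt]
    have h1 : (c i0 0 + R * Real.cos θ - c i0 0)^2 + (c i0 1 + R * Real.sin θ - c i0 1)^2 = R^2 := by
      have := Real.sin_sq_add_cos_sq θ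
      ring_nf
      nlinarith [Real.sin_sq_add_cos_sq θ]
    rw [h1, Real.sqrt_sq hR0.le]
  -- chord between parameters π/3 apart
  have hchord : ∀ a b : ℝ, b = a + π/3 → dist (px a) (px b) = R := by
    intro a b hab
    rw [hpx]; simp only []
    rw [dist_pt]
    simp only [pt, Matrix.cons_val_zero, Matrix.cons_val_one, Matrix.head_cons]
    have h0 : (c i0 0 + R * cos a - (c i0 0 + R * cos b)) ^ 2 +
        (c i0 1 + R * sin a - (c i0 1 + R * sin b)) ^ 2
        = R^2 * (2 - 2 * Real.cos (a - b)) := by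
      rw [Real.cos_sub]
      nlinarith [Real.sin_sq_add_cos_sq a, Real.sin_sq_add_cos_sq b]
    have h2 : Real.cos (a - b) = 1/2 := by
      rw [hab, show a - (a + π/3) = -(π/3) by ring, Real.cos_neg, Real.cos_pi_div_three]
    rw [h0, h2, show R^2*(2-2*(1/2)) = R^2 by ring, Real.sqrt_sq hR0.le]
  by_contra hcon
  push_neg at hcon
  set I := Set.Icc θ1 (θ1 + π/3) with hI
  have hIne : θ1 ∈ I := ⟨le_refl _, by linarith [pi_pos]⟩
  -- blocked sets
  set U : ι → Set ℝ := fun i => px ⁻¹' Metric.ball (c i) R with hU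
  have hUopen : ∀ i, IsOpen (U i) := fun i => Metric.isOpen_ball.preimage hcont
  have hUmem : ∀ i θ, θ ∈ U i ↔ dist (px θ) (c i) < R := by
    intro i θ; rw [hU]; simp [Metric.mem_ball]
  have hblock0 : ∀ i θ, θ ∈ U i → i ≠ i0 := by
    intro i θ hθ hii
    rw [hUmem] at hθ
    rw [hii, hdx θ] at hθ
    exact lt_irrefl _ hθ
  have sqlt : ∀ (a b : E2), dist a b < R → ‖a - b‖^2 < 4/3 := by
    intro a b hab
    rw [← dist_eq_norm, ← hR2]
    exact pow_lt_pow_left₀ hab dist_nonneg (by norm_num)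
  have hdisj : ∀ i j, i ≠ j → ∀ θ, θ ∈ U i → θ ∈ U j → False := by
    intro i j hij θ h1 h2
    have hi0 : i ≠ i0 := hblock0 i θ h1
    have hj0 : j ≠ i0 := hblock0 j θ h2
    rw [hUmem] at h1 h2
    apply claimA (px θ - c i0) (c i - c i0) (c j - c i0)
    · rw [← dist_eq_norm, hdx θ, hR2]
    · rw [← dist_eq_norm]; exact hpack hi0
    · rw [← dist_eq_norm]; exact hpack hj0
    · rw [sub_sub_sub_cancel_right, ← dist_eq_norm]; exact hpack hij
    · rw [sub_sub_sub_cancel_right]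
      have := sqlt (c i) (px θ) (by rw [dist_comm]; exact h1)
      exact this
    · rw [sub_sub_sub_cancel_right]
      exact sqlt (c j) (px θ) (by rw [dist_comm]; exact h2)
  obtain ⟨istar, histar⟩ := hcon θ1 hIne
  have histar' : θ1 ∈ U istar := by rw [hUmem]; exact histar
  set V : Set ℝ := ⋃ j ∈ {j : ι | j ≠ istar}, U j with hV
  have hVopen : IsOpen V := isOpen_biUnion fun j _ => hUopen j
  have hcover : I ⊆ U istar ∪ V := by
    intro θ hθ
    obtain ⟨i, hi⟩ := hcon θ hθ
    by_cases hcase : i = istar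
    · left; rw [hUmem]; rw [← hcase]; exact hi
    · right; rw [hV]
      exact Set.mem_biUnion hcase ((hUmem i θ).mpr hi)
  have hpc := isPreconnected_Icc (a := θ1) (b := θ1 + π/3)
  rw [← hI] at hpc
  by_cases hne2 : (I ∩ V).Nonempty
  · obtain ⟨θ, hθI, hθU, hθV⟩ := hpc (U istar) V (hUopen istar) hVopen hcover
      ⟨θ1, hIne, histar'⟩ hne2
    rw [hV] at hθV
    obtain ⟨j, hj, hθj⟩ := Set.mem_iUnion₂.mp hθV
    exact hdisj istar j (Ne.symm hj) θ hθU hθj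
  · have hsub : I ⊆ U istar := by
      intro θ hθ
      rcases hcover hθ with h | h
      · exact h
      · exact absurd ⟨θ, hθ, h⟩ hne2
    have hi1 : θ1 ∈ U istar := histar'
    have hi2 : θ1 + π/3 ∈ U istar := hsub ⟨by linarith [pi_pos], le_refl _⟩
    rw [hUmem] at hi1 hi2
    have his0 : istar ≠ i0 := hblock0 istar θ1 histar'
    apply claimB (px θ1 - c i0) (px (θ1 + π/3) - c i0) (c istar - c i0)
    · rw [← dist_eq_norm, hdx, hR2]
    · rw [← dist_eq_norm, hdx, hR2]
    · rw [sub_sub_sub_cancel_right, ← dist_eq_norm, hchord θ1 (θ1 + π/3) rfl, hR2]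
    · rw [← dist_eq_norm]; exact hpack his0
    · rw [sub_sub_sub_cancel_right]
      exact sqlt (c istar) (px θ1) (by rw [dist_comm]; exact hi1)
    · rw [sub_sub_sub_cancel_right]
      exact sqlt (c istar) (px (θ1 + π/3)) (by rw [dist_comm]; exact hi2)


lemma sin_add_pi_div_three_le (a : ℝ) : Real.sin (a + π/3) ≤ Real.sin a + 1 := by
  rw [Real.sin_add, Real.cos_pi_div_three, Real.sin_pi_div_three]
  have h3 : Real.sqrt 3 ^ 2 = 3 := Real.sq_sqrt (by norm_num)
  nlinarith [Real.sin_sq_add_cos_sq a, sq_nonneg (Real.cos a + Real.sqrt 3 * Real.sin a),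
    Real.sqrt_nonneg 3, Real.neg_one_le_sin a, sq_nonneg (2*Real.sin a + 1)]

lemma arcsin_half : Real.arcsin (1/2) = π/6 := by
  rw [← Real.sin_pi_div_six]
  exact Real.arcsin_sin (by linarith [pi_pos]) (by linarith [pi_pos])

lemma window (R s : ℝ) (hR0 : 0 < R) (hs : |s| < R) :
    ∃ a : ℝ, -(π/2) ≤ a ∧ a + π/3 ≤ π/2 ∧
      ∀ θ, a ≤ θ → θ ≤ a + π/3 → -(R/2) ≤ s + R * Real.sin θ ∧ s + R * Real.sin θ ≤ R/2 := by
  have hsR : -R < s ∧ s < R := abs_lt.mp hs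
  have hmono := Real.strictMonoOn_sin.monotoneOn
  have hsRb : s/R < 1 := by rw [div_lt_one hR0]; exact hsR.2
  have hsRa : -1 < s/R := by rw [neg_lt, ← neg_div, div_lt_one hR0]; linarith [hsR.1]
  by_cases hcase : s ≤ R/2
  · have hsRc : s/R ≤ 1/2 := by rw [div_le_iff₀ hR0]; linarith
    have hy0a : (-1:ℝ) ≤ -(1/2) - s/R := by linarith
    have hy0b : -(1/2) - s/R ≤ 1/2 := by linarith
    have hy0c : -(1/2) - s/R ≤ 1 := by linarith
    have hble : Real.arcsin (-(1/2) - s/R) ≤ π/6 := by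
      rw [← arcsin_half]; exact Real.monotone_arcsin hy0b
    refine ⟨Real.arcsin (-(1/2) - s/R), Real.neg_pi_div_two_le_arcsin _, by linarith, ?_⟩
    intro θ hθ1 hθ2
    have hθmem : θ ∈ Set.Icc (-(π/2)) (π/2) :=
      ⟨le_trans (Real.neg_pi_div_two_le_arcsin _) hθ1, by linarith⟩
    have hamem : Real.arcsin (-(1/2) - s/R) ∈ Set.Icc (-(π/2)) (π/2) :=
      ⟨Real.neg_pi_div_two_le_arcsin _, Real.arcsin_le_pi_div_two _⟩
    have hbmem : Real.arcsin (-(1/2) - s/R) + π/3 ∈ Set.Icc (-(π/2)) (π/2) :=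
      ⟨by linarith [hamem.1, pi_pos], by linarith⟩
    have hsin1 : Real.sin (Real.arcsin (-(1/2) - s/R)) ≤ Real.sin θ := hmono hamem hθmem hθ1
    have hsin2 : Real.sin θ ≤ Real.sin (Real.arcsin (-(1/2) - s/R) + π/3) := hmono hθmem hbmem hθ2
    rw [Real.sin_arcsin hy0a hy0c] at hsin1
    have hsin3 : Real.sin (Real.arcsin (-(1/2) - s/R) + π/3) ≤ (-(1/2) - s/R) + 1 := by
      have := sin_add_pi_div_three_le (Real.arcsin (-(1/2) - s/R))
      rwa [Real.sin_arcsin hy0a hy0c] at this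
    have hR1 : R * (s/R) = s := by field_simp
    constructor
    · have := mul_le_mul_of_nonneg_left hsin1 hR0.le
      nlinarith
    · have := mul_le_mul_of_nonneg_left (le_trans hsin2 hsin3) hR0.le
      nlinarith
  · push_neg at hcase
    have hy1a : (-1:ℝ) ≤ 1/2 - s/R := by linarith
    have hy1a' : -(1/2) ≤ 1/2 - s/R := by linarith
    have hy1b : 1/2 - s/R ≤ 1 := by nlinarith [div_pos (by linarith : (0:ℝ) < s) hR0]
    have hage : -(π/6) ≤ Real.arcsin (1/2 - s/R) := by
      rw [← arcsin_half, ← Real.arcsin_neg]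
      exact Real.monotone_arcsin hy1a'
    refine ⟨Real.arcsin (1/2 - s/R) - π/3, by linarith, by
      linarith [Real.arcsin_le_pi_div_two (1/2 - s/R)], ?_⟩
    intro θ hθ1 hθ2
    rw [sub_add_cancel] at hθ2
    have hθmem : θ ∈ Set.Icc (-(π/2)) (π/2) :=
      ⟨by linarith [pi_pos], le_trans hθ2 (Real.arcsin_le_pi_div_two _)⟩
    have hamem : Real.arcsin (1/2 - s/R) - π/3 ∈ Set.Icc (-(π/2)) (π/2) :=
      ⟨by linarith, by linarith [Real.arcsin_le_pi_div_two (1/2 - s/R), pi_pos]⟩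
    have hbmem : Real.arcsin (1/2 - s/R) ∈ Set.Icc (-(π/2)) (π/2) :=
      ⟨Real.neg_pi_div_two_le_arcsin _, Real.arcsin_le_pi_div_two _⟩
    have hsin2 : Real.sin θ ≤ Real.sin (Real.arcsin (1/2 - s/R)) := hmono hθmem hbmem hθ2
    have hsin1 : Real.sin (Real.arcsin (1/2 - s/R) - π/3) ≤ Real.sin θ := hmono hamem hθmem hθ1
    rw [Real.sin_arcsin hy1a hy1b] at hsin2
    have hsin3 : (1/2 - s/R) - 1 ≤ Real.sin (Real.arcsin (1/2 - s/R) - π/3) := by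
      have := sin_add_pi_div_three_le (Real.arcsin (1/2 - s/R) - π/3)
      rw [sub_add_cancel, Real.sin_arcsin hy1a hy1b] at this
      linarith
    have hR1 : R * (s/R) = s := by field_simp
    constructor
    · have := mul_le_mul_of_nonneg_left (le_trans hsin3 hsin1) hR0.le
      nlinarith
    · have := mul_le_mul_of_nonneg_left hsin2 hR0.le
      nlinarith


lemma good_point (r : ℝ) (hr0 : 0 < r) (ι : Type) (c : ι → E2) (q : E2)
    (h1 : r ≤ q 0) (h2 : q 0 ≤ 2 + 3*r) (h3 : r ≤ q 1) (h4 : q 1 ≤ 1 + 2*r)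
    (h5 : ∀ i, 1 + r ≤ dist q (c i)) :
    Metric.closedBall q r ⊆
        {p : E2 | 0 ≤ p 0 ∧ p 0 ≤ 2 + 4 * r ∧ 0 ≤ p 1 ∧ p 1 ≤ 1 + 3 * r} ∧
      ∀ i, 1 + r ≤ dist q (c i) := by
  refine ⟨?_, h5⟩
  intro z hz
  have hzq : dist z q ≤ r := Metric.mem_closedBall.mp hz
  have hde : dist z q = Real.sqrt ((z 0 - q 0)^2 + (z 1 - q 1)^2) := by
    rw [EuclideanSpace.dist_eq, Fin.sum_univ_two]
    simp [Real.dist_eq, sq_abs]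
  have hS : (z 0 - q 0)^2 + (z 1 - q 1)^2 ≤ r^2 := by
    have h0 : (0:ℝ) ≤ (z 0 - q 0)^2 + (z 1 - q 1)^2 := by positivity
    have := pow_le_pow_left₀ (Real.sqrt_nonneg _) (hde ▸ hzq) 2
    rwa [Real.sq_sqrt h0] at this
  have ha : |z 0 - q 0| ≤ r := by
    rw [abs_le]
    constructor <;> nlinarith [sq_nonneg (z 1 - q 1)]
  have hb : |z 1 - q 1| ≤ r := by
    rw [abs_le]
    constructor <;> nlinarith [sq_nonneg (z 0 - q 0)]
  rw [abs_le] at ha hb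
  exact ⟨by linarith [ha.1], by linarith [ha.2], by linarith [hb.1], by linarith [hb.2]⟩

/-- In any packing of unit disks of the plane, the closed rectangle
`[0, 2+4r] × [0, 1+3r]` (`r = 2/√3 − 1`) contains a hole: a closed disk of radius `r`
disjoint from the interiors of all packing disks. -/
theorem stmt_15 (r : ℝ) (hr : r = 2 / Real.sqrt 3 - 1)
    (ι : Type) (c : ι → E2)
    (hpack : Pairwise fun i j => 2 ≤ dist (c i) (c j)) :
    ∃ q : E2,
      Metric.closedBall q r ⊆
        {p : E2 | 0 ≤ p 0 ∧ p 0 ≤ 2 + 4 * r ∧ 0 ≤ p 1 ∧ p 1 ≤ 1 + 3 * r} ∧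
      ∀ i, 1 + r ≤ dist q (c i) := by
  have h3 : Real.sqrt 3 ^ 2 = 3 := Real.sq_sqrt (by norm_num)
  have h3pos : 0 < Real.sqrt 3 := Real.sqrt_pos.mpr (by norm_num)
  have h3lt : Real.sqrt 3 < 2 := by nlinarith
  have h3gt : 1 < Real.sqrt 3 := by nlinarith
  have hr0 : 0 < r := by
    rw [hr, lt_sub_iff_add_lt, zero_add, lt_div_iff₀ h3pos]
    linarith
  have hr1 : r < 1 := by
    rw [hr, sub_lt_iff_lt_add, div_lt_iff₀ h3pos]
    nlinarith
  have hR1 : 1 + r = 2 / Real.sqrt 3 := by rw [hr]; ring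
  have hR0 : (0:ℝ) < 2 / Real.sqrt 3 := by positivity
  have hR2 : (2 / Real.sqrt 3)^2 = 4/3 := by
    rw [div_pow, h3]; norm_num
  by_cases hcase : ∀ i, 1 + r ≤ dist (pt (1+2*r) ((1+3*r)/2)) (c i)
  · refine ⟨pt (1+2*r) ((1+3*r)/2), ?_⟩
    apply good_point r hr0 ι c _ ?_ ?_ ?_ ?_ hcase
    · show r ≤ 1 + 2*r; linarith
    · show 1 + 2*r ≤ 2 + 3*r; linarith
    · show r ≤ (1+3*r)/2; linarith
    · show (1+3*r)/2 ≤ 1 + 2*r; linarith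
  · push_neg at hcase
    obtain ⟨i0, hi0⟩ := hcase
    rw [hR1] at hi0
    -- coordinates of the near center relative to the rectangle center
    have hd2 : ((1+2*r) - c i0 0)^2 + ((1+3*r)/2 - c i0 1)^2 < (2/Real.sqrt 3)^2 := by
      rw [dist_pt] at hi0
      exact (Real.sqrt_lt' hR0).mp hi0
    -- horizontal and vertical offsets of the near center
    have hsabs : |c i0 1 - (1+3*r)/2| < 2/Real.sqrt 3 := by
      rw [abs_lt]
      constructor <;> nlinarith [sq_nonneg ((1+2*r) - c i0 0), hR0]
    have htabs : |c i0 0 - (1+2*r)| < 2/Real.sqrt 3 := by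
      rw [abs_lt]
      constructor <;> nlinarith [sq_nonneg ((1+3*r)/2 - c i0 1), hR0]
    rw [abs_lt] at htabs
    obtain ⟨a, ha1, ha2, hvert⟩ := window (2/Real.sqrt 3) (c i0 1 - (1+3*r)/2) hR0 hsabs
    by_cases ht : c i0 0 - (1+2*r) ≤ 0
    · -- aim rightward: window [a, a+π/3]
      obtain ⟨θ, hθmem, hhole⟩ := adjacent_hole (2/Real.sqrt 3) hR0 hR2 ι c hpack i0 a
      obtain ⟨hθ1, hθ2⟩ := hθmem
      have hcosmem : θ ∈ Set.Icc (-(π/2)) (π/2) := ⟨by linarith, by linarith⟩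
      have hcos0 : 0 ≤ Real.cos θ := Real.cos_nonneg_of_mem_Icc hcosmem
      have hcos1 : Real.cos θ ≤ 1 := Real.cos_le_one θ
      have hv := hvert θ hθ1 hθ2
      refine ⟨pt (c i0 0 + (2/Real.sqrt 3) * Real.cos θ) (c i0 1 + (2/Real.sqrt 3) * Real.sin θ), ?_⟩
      apply good_point r hr0 ι c _ ?_ ?_ ?_ ?_ ?_
      · show r ≤ c i0 0 + (2/Real.sqrt 3) * Real.cos θ
        nlinarith [htabs.1, hR1]
      · show c i0 0 + (2/Real.sqrt 3) * Real.cos θ ≤ 2 + 3*r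
        nlinarith
      · show r ≤ c i0 1 + (2/Real.sqrt 3) * Real.sin θ
        nlinarith [hv.1]
      · show c i0 1 + (2/Real.sqrt 3) * Real.sin θ ≤ 1 + 2*r
        nlinarith [hv.2]
      · intro i
        rw [hR1]
        exact hhole i
    · -- aim leftward: window [π - (a+π/3), π - a]
      push_neg at ht
      obtain ⟨θ, hθmem, hhole⟩ := adjacent_hole (2/Real.sqrt 3) hR0 hR2 ι c hpack i0 (π - (a + π/3))
      obtain ⟨hθ1, hθ2⟩ := hθmem
      rw [show π - (a + π/3) + π/3 = π - a by ring] at hθ2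
      have hθ'1 : a ≤ π - θ := by linarith
      have hθ'2 : π - θ ≤ a + π/3 := by linarith
      have hsin : Real.sin θ = Real.sin (π - θ) := (Real.sin_pi_sub θ).symm
      have hcos : Real.cos θ = -Real.cos (π - θ) := by
        conv_lhs => rw [show θ = π - (π - θ) by ring]
        exact Real.cos_pi_sub _
      have hcosmem : π - θ ∈ Set.Icc (-(π/2)) (π/2) := ⟨by linarith, by linarith⟩
      have hcos0 : 0 ≤ Real.cos (π - θ) := Real.cos_nonneg_of_mem_Icc hcosmem
      have hcos1 : Real.cos (π - θ) ≤ 1 := Real.cos_le_one _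
      have hv := hvert (π - θ) hθ'1 hθ'2
      rw [← hsin] at hv
      refine ⟨pt (c i0 0 + (2/Real.sqrt 3) * Real.cos θ) (c i0 1 + (2/Real.sqrt 3) * Real.sin θ), ?_⟩
      apply good_point r hr0 ι c _ ?_ ?_ ?_ ?_ ?_
      · show r ≤ c i0 0 + (2/Real.sqrt 3) * Real.cos θ
        rw [hcos]
        nlinarith
      · show c i0 0 + (2/Real.sqrt 3) * Real.cos θ ≤ 2 + 3*r
        rw [hcos]
        nlinarith [htabs.2]
      · show r ≤ c i0 1 + (2/Real.sqrt 3) * Real.sin θ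
        nlinarith [hv.1]
      · show c i0 1 + (2/Real.sqrt 3) * Real.sin θ ≤ 1 + 2*r
        nlinarith [hv.2]
      · intro i
        rw [hR1]
        exact hhole i
end
end

section
/- Every configuration of at most 10 points in the plane can be covered by a translate of the standard hexagonal close packing of unit disks: for any points p₁, …, p₁₀ ∈ ℝ² there exists t ∈ ℝ² such that each pᵢ lies in some closed unit disk centered at a point of H + t, where H is the hexagonal lattice of minimum distance 2. -/
noncomputable section

open MeasureTheory Metric Submodule Pointwise ENNReal

def hv : Fin 2 → E2 := ![pt 2 0, pt 1 (Real.sqrt 3)]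
lemma sqrt3_pos : (0:ℝ) < Real.sqrt 3 := Real.sqrt_pos.2 (by norm_num)
lemma hv_indep : LinearIndependent ℝ hv := by
  rw [linearIndependent_fin2]
  constructor
  · intro h
    have := congrArg (fun v : E2 => v 1) h
    simp [hv, pt] at this
  · intro a h
    have h0 := congrArg (fun v : E2 => v 0) h
    have h1 := congrArg (fun v : E2 => v 1) h
    simp [hv, pt] at h0 h1
    rw [h0] at h1; norm_num at h1



def hb : Module.Basis (Fin 2) ℝ E2 :=
  basisOfLinearIndependentOfCardEqFinrank hv_indep (by simp)
lemma hb_apply (i : Fin 2) : hb i = hv i := by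
  simp [hb, coe_basisOfLinearIndependentOfCardEqFinrank]

def vec (mn : ℤ × ℤ) : E2 := mn.1 • hv 0 + mn.2 • hv 1

lemma vec_coords (m n : ℤ) : vec (m, n) = pt (2*m + n) (n * Real.sqrt 3) := by
  ext i
  fin_cases i <;>
    simp [vec, hv, pt, Matrix.cons_val_zero, Matrix.cons_val_one] <;> ring

lemma pt_norm (x y : ℝ) : ‖pt x y‖ = Real.sqrt (x^2 + y^2) := by
  rw [EuclideanSpace.norm_eq]
  simp [pt, Fin.sum_univ_two, sq_abs]

lemma vec_add (a b : ℤ × ℤ) : vec (a + b) = vec a + vec b := by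
  simp [vec, Prod.fst_add, Prod.snd_add, add_smul]; abel

lemma vec_norm_ge (m n : ℤ) (h : ¬(m = 0 ∧ n = 0)) : 2 ≤ ‖vec (m, n)‖ := by
  rw [vec_coords, pt_norm]
  have hk : 1 ≤ m^2 + m*n + n^2 := by
    rcases eq_or_ne n 0 with hn | hn
    · subst hn
      have hm : m ≠ 0 := by tauto
      have : 1 ≤ m^2 := by rcases lt_or_gt_of_ne hm with h | h <;> nlinarith
      nlinarith
    · have : 1 ≤ n^2 := by rcases lt_or_gt_of_ne hn with h | h <;> nlinarith
      nlinarith [sq_nonneg (2*m + n)]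
  have hk' : (4:ℝ) ≤ (2*(m:ℝ) + n)^2 + (n * Real.sqrt 3)^2 := by
    have h3 : (Real.sqrt 3)^2 = 3 := Real.sq_sqrt (by norm_num)
    have : (4:ℝ) ≤ 4 * ((m:ℝ)^2 + m*n + n^2) := by
      have := (by exact_mod_cast hk : (1:ℝ) ≤ (m:ℝ)^2 + m*n + n^2)
      linarith
    nlinarith
  calc (2:ℝ) = Real.sqrt 4 := by
        rw [show (4:ℝ) = 2^2 by norm_num, Real.sqrt_sq (by norm_num)]
    _ ≤ _ := Real.sqrt_le_sqrt hk'

def L : AddSubgroup E2 := (span ℤ (Set.range ⇑hb)).toAddSubgroup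

lemma range_hb : Set.range ⇑hb = {hv 0, hv 1} := by
  ext x
  constructor
  · rintro ⟨i, rfl⟩
    fin_cases i <;> simp [hb_apply]
  · rintro (rfl | rfl)
    · exact ⟨0, hb_apply 0⟩
    · exact ⟨1, hb_apply 1⟩

lemma mem_L_iff {q : E2} : q ∈ L ↔ ∃ mn : ℤ × ℤ, vec mn = q := by
  have : q ∈ L ↔ q ∈ span ℤ (Set.range ⇑hb) := Iff.rfl
  rw [this, range_hb, Submodule.mem_span_pair]
  constructor
  · rintro ⟨a, b, rfl⟩; exact ⟨(a, b), rfl⟩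
  · rintro ⟨⟨a, b⟩, rfl⟩; exact ⟨a, b, rfl⟩

lemma vec_injective : Function.Injective vec := by
  intro a b hab
  by_contra hne
  have h : vec (a - b) = 0 := by
    have hs : vec (a - b) = vec a - vec b := by
      simp only [vec, Prod.fst_sub, Prod.snd_sub, sub_smul]; abel
    rw [hs, hab, sub_self]
  have h2 : ¬((a - b).1 = 0 ∧ (a - b).2 = 0) := by
    intro ⟨h1, h2⟩
    apply hne
    have : a - b = 0 := Prod.ext h1 h2
    have := sub_eq_zero.mp this
    exact this
  have := vec_norm_ge (a - b).1 (a - b).2 h2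
  rw [show ((a-b).1, (a-b).2) = a - b from rfl, h] at this
  simp at this
  linarith

def D : Set E2 := ZSpan.fundamentalDomain hb

lemma D_measurable : MeasurableSet D := ZSpan.fundamentalDomain_measurableSet hb

def b0 : Module.Basis (Fin 2) ℝ E2 := (EuclideanSpace.basisFun (Fin 2) ℝ).toBasis

lemma volume_FD_b0 : volume (ZSpan.fundamentalDomain b0) = 1 := by
  have hset : ZSpan.fundamentalDomain b0 =
      (MeasurableEquiv.toLp 2 (Fin 2 → ℝ)).symm ⁻¹' (Set.pi Set.univ fun _ => Set.Ico (0:ℝ) 1) := by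
    ext x
    simp [ZSpan.fundamentalDomain, b0, MeasurableEquiv.toLp, Set.mem_pi]
    exact Iff.rfl
  rw [hset, (EuclideanSpace.volume_preserving_symm_measurableEquiv_toLp (Fin 2)).measure_preimage
    (MeasurableSet.univ_pi fun _ => measurableSet_Ico).nullMeasurableSet]
  rw [volume_pi_pi]
  simp

lemma volume_D : volume D = ENNReal.ofReal (2 * Real.sqrt 3) := by
  rw [show D = ZSpan.fundamentalDomain hb from rfl,
    ZSpan.measure_fundamentalDomain hb volume b0, volume_FD_b0, mul_one]
  congr 1
  rw [Module.Basis.det_apply]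
  have hM : ∀ i j, b0.toMatrix ⇑hb i j = hv j i := by
    intro i j
    rw [Module.Basis.toMatrix_apply, hb_apply]
    rfl
  rw [Matrix.det_fin_two]
  rw [hM, hM, hM, hM]
  simp [hv, pt]

lemma volume_unit_ball (c : E2) : volume (ball c 1) = ENNReal.ofReal Real.pi := by
  rw [EuclideanSpace.volume_ball]
  simp [Real.Gamma_two, Real.sq_sqrt Real.pi_nonneg, Fintype.card_fin]
  rw [show (1:ℝ) + 1 = 2 by norm_num, Real.Gamma_two, div_one]

def eL : ℤ × ℤ ≃ L :=
  Equiv.ofBijective (fun mn => (⟨vec mn, mem_L_iff.mpr ⟨mn, rfl⟩⟩ : L))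
    ⟨fun a b hab => vec_injective (by simpa using congrArg Subtype.val hab),
     fun q => by
      obtain ⟨mn, hmn⟩ := mem_L_iff.mp q.2
      exact ⟨mn, Subtype.ext hmn⟩⟩

instance : Countable L := Countable.of_equiv (ℤ × ℤ) eL

lemma dist_vec (a b : ℤ × ℤ) (hab : a ≠ b) : 2 ≤ dist (vec a) (vec b) := by
  rw [dist_eq_norm, show vec a - vec b = vec (a - b) by
    simp only [vec, Prod.fst_sub, Prod.snd_sub, sub_smul]; abel]
  have : ¬((a - b).1 = 0 ∧ (a - b).2 = 0) := by
    rintro ⟨h1, h2⟩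
    exact hab (sub_eq_zero.mp (Prod.ext h1 h2))
  exact vec_norm_ge (a - b).1 (a - b).2 this

lemma vadd_ball_eq (g : L) (c : E2) : g +ᵥ ball c 1 = ball ((g : E2) + c) 1 := by
  ext t
  constructor
  · rintro ⟨u, hu, rfl⟩
    have hgu : g +ᵥ u = (g : E2) + u := rfl
    simp only [mem_ball] at hu ⊢
    rw [hgu, dist_add_left]
    exact hu
  · intro ht
    simp only [mem_ball] at ht
    refine ⟨-(g : E2) + t, ?_, ?_⟩
    · have h1 : (g:E2) + (-(g:E2) + t) = t := add_neg_cancel_left _ _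
      simp only [mem_ball]
      calc dist (-(g:E2) + t) c = dist ((g:E2) + (-(g:E2) + t)) ((g:E2) + c) :=
            (dist_add_left _ _ _).symm
        _ = dist t ((g:E2) + c) := by rw [h1]
        _ < 1 := ht
    · show (g : E2) + (-(g:E2) + t) = t
      exact add_neg_cancel_left _ _

lemma volume_good (c : E2) :
    volume ((⋃ mn : ℤ × ℤ, ball (vec mn + c) 1) ∩ D) = ENNReal.ofReal Real.pi := by
  have hFD : IsAddFundamentalDomain L D volume := ZSpan.isAddFundamentalDomain' hb volume
  have key := hFD.measure_eq_tsum (ball c 1)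
  rw [volume_unit_ball c] at key
  rw [Set.iUnion_inter]
  rw [measure_iUnion ?_ (fun mn => measurableSet_ball.inter D_measurable)]
  · rw [key, ← (eL).tsum_eq (fun g : L => volume ((g +ᵥ ball c 1) ∩ D))]
    congr 1
    funext mn
    congr 1
    rw [vadd_ball_eq]
    rfl
  · intro a b hab
    have hd : Disjoint (ball (vec a + c) 1) (ball (vec b + c) 1) := by
      apply ball_disjoint_ball
      rw [show dist (vec a + c) (vec b + c) = dist (vec a) (vec b) by
        rw [dist_add_right]]
      linarith [dist_vec a b hab]
    exact (hd.mono (Set.inter_subset_left) (Set.inter_subset_left))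

lemma vec_mem_hex (mn : ℤ × ℤ) : vec mn ∈ hexLattice 2 := by
  refine ⟨mn.1, mn.2, ?_⟩
  have h1 : pt (2/2) (Real.sqrt 3 * 2 / 2) = pt 1 (Real.sqrt 3) := by
    norm_num
  rw [h1]
  simp only [vec, hv]
  rw [← Int.cast_smul_eq_zsmul ℝ, ← Int.cast_smul_eq_zsmul ℝ]
  rfl

lemma num_ineq : (10 : ℝ≥0∞) * ENNReal.ofReal (2 * Real.sqrt 3 - Real.pi)
    < ENNReal.ofReal (2 * Real.sqrt 3) := by
  have hs : Real.sqrt 3 < 1.7321 := by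
    rw [show (1.7321:ℝ) = Real.sqrt (1.7321^2) from
      (Real.sqrt_sq (by norm_num)).symm]
    apply Real.sqrt_lt_sqrt (by norm_num)
    norm_num
  have hpi : (3.141592 : ℝ) < Real.pi := Real.pi_gt_d6
  have hs0 : (1 : ℝ) < Real.sqrt 3 := by
    rw [show (1:ℝ) = Real.sqrt 1 from (Real.sqrt_one).symm]
    exact Real.sqrt_lt_sqrt (by norm_num) (by norm_num)
  have key : 10 * (2 * Real.sqrt 3 - Real.pi) < 2 * Real.sqrt 3 := by nlinarith
  rw [show (10 : ℝ≥0∞) = ENNReal.ofReal 10 by simp,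
    ← ENNReal.ofReal_mul (by norm_num)]
  exact ENNReal.ofReal_lt_ofReal_iff (by positivity) |>.mpr key

/-- Any 10 points in the plane can be covered by a translate of the hexagonal close packing
of unit disks: there is a translation `t` such that each point lies in a closed unit disk
centered at a point of `H + t`. -/
theorem stmt_17 (p : Fin 10 → E2) :
    ∃ t : E2, ∀ i, ∃ q ∈ hexLattice 2, dist (p i) (q + t) ≤ 1 := by
  classical
  set U : Fin 10 → Set E2 := fun i => ⋃ mn : ℤ × ℤ, ball (vec mn + p i) 1 with hU
  have hUopen : ∀ i, IsOpen (U i) := fun i => isOpen_iUnion fun _ => isOpen_ball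
  have hDU : ∀ i, volume (D ∩ U i) = ENNReal.ofReal Real.pi := by
    intro i
    rw [Set.inter_comm]
    exact volume_good (p i)
  have hdiff : ∀ i, volume (D \ U i) = ENNReal.ofReal (2 * Real.sqrt 3 - Real.pi) := by
    intro i
    have h1 : D \ (D ∩ U i) = D \ U i := Set.diff_self_inter
    rw [← h1, measure_diff Set.inter_subset_left
      ((D_measurable.inter (hUopen i).measurableSet).nullMeasurableSet)
      (by rw [hDU i]; exact ENNReal.ofReal_ne_top),
      hDU i, volume_D, ENNReal.ofReal_sub _ Real.pi_nonneg]
  have hsmall : volume (⋃ i, D \ U i) < volume D := by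
    calc volume (⋃ i, D \ U i) ≤ ∑ i : Fin 10, volume (D \ U i) :=
          measure_iUnion_fintype_le _ _
      _ = (10 : ℝ≥0∞) * ENNReal.ofReal (2 * Real.sqrt 3 - Real.pi) := by
          simp [hdiff, Finset.sum_const, Finset.card_univ]
      _ < ENNReal.ofReal (2 * Real.sqrt 3) := num_ineq
      _ = volume D := volume_D.symm
  have hne : ¬ D ⊆ ⋃ i, D \ U i := by
    intro hsub
    exact absurd (measure_mono hsub) (not_le.mpr hsmall)
  obtain ⟨t, htD, htU⟩ : ∃ t, t ∈ D ∧ t ∉ ⋃ i, D \ U i := by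
    by_contra h
    push_neg at h
    exact hne fun x hx => h x hx
  refine ⟨t, fun i => ?_⟩
  have : t ∈ U i := by
    by_contra htUi
    exact htU (Set.mem_iUnion.mpr ⟨i, htD, htUi⟩)
  obtain ⟨S, ⟨mn, rfl⟩, htS⟩ := this
  refine ⟨-vec mn, ?_, ?_⟩
  · have := vec_mem_hex (-mn)
    rwa [show vec (-mn) = -vec mn by
      have := vec_add mn (-mn)
      simp only [add_neg_cancel] at this
      have h0 : vec 0 = 0 := by simp [vec]
      rw [h0] at this
      exact (neg_eq_of_add_eq_zero_right this.symm).symm ] at this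
  · have hball : dist t (vec mn + p i) < 1 := htS
    have : dist (p i) (-vec mn + t) = dist (vec mn + p i) t := by
      rw [← dist_add_left (vec mn) (p i) (-vec mn + t), add_neg_cancel_left]
    rw [this, dist_comm]
    exact le_of_lt hball
end
end

section
/- The 25 translates of the interstitium by the points of the lattice H/5 cover the fundamental domain: letting H be the hexagonal lattice of minimum distance 2, D the closed unit disk, and I(t) = (ℝ² \ (H + t + D))/H, the sets I(t) for t ranging over a set of coset representatives of (H/5)/H cover ℝ²/H. -/
noncomputable section

lemma key (e1 e2 : ℝ) (h1 : -(2/15) ≤ e1) (h2 : e1 < 1/12) (h3 : -(2/15) ≤ e2) (h4 : e2 < 1/12)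
    (h5 : -(1/12) < e1 + e2) (m n : ℤ) :
    1 < (2*(1/3 + e1 - m) + (1/3 + e2 - n))^2 + 3*(1/3 + e2 - n)^2 := by
  rcases le_or_gt n (-1) with hn | hn
  · have hnr : (n:ℝ) ≤ -1 := by exact_mod_cast hn
    nlinarith [sq_nonneg (2*(1/3 + e1 - m) + (1/3 + e2 - n)), sq_nonneg (1/3 + e2 - (n:ℝ) - 6/5)]
  · rcases le_or_gt 2 n with hn2 | hn2
    · have hnr : (2:ℝ) ≤ n := by exact_mod_cast hn2
      nlinarith [sq_nonneg (2*(1/3 + e1 - m) + (1/3 + e2 - n)), sq_nonneg (1/3 + e2 - (n:ℝ) + 19/12)]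
    · interval_cases n
      · rcases le_or_gt m (-1) with hm | hm
        · have hmr : (m:ℝ) ≤ -1 := by exact_mod_cast hm
          push_cast
          nlinarith [sq_nonneg (1/3 + e2), sq_nonneg (2*(1/3 + e1 - (m:ℝ)) + (1/3 + e2) - 13/5)]
        · rcases le_or_gt 2 m with hm2 | hm2
          · have hmr : (2:ℝ) ≤ m := by exact_mod_cast hm2
            push_cast
            nlinarith [sq_nonneg (1/3 + e2), sq_nonneg (2*(1/3 + e1 - (m:ℝ)) + (1/3 + e2) + 11/4)]
          · interval_cases m
            · push_cast
              nlinarith [sq_nonneg (2*e1 + e2), sq_nonneg e2]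
            · push_cast
              nlinarith [sq_nonneg (2*e1 + e2 - 1 + 1), sq_nonneg e2, sq_nonneg (2*e1+e2)]
      · push_cast
        nlinarith [sq_nonneg (2*(1/3 + e1 - (m:ℝ)) + (e2 - 2/3)), sq_nonneg (e2 - 2/3 + 7/12)]

lemma dist_lemma (x : E2) (a b : ℝ) (hx0 : x 0 = 2*a + b) (hx1 : x 1 = Real.sqrt 3 * b)
    (M N : ℤ)
    (h : ∀ m n : ℤ, 1 < (2*(a + (M:ℝ)/5 - m) + (b + (N:ℝ)/5 - n))^2 + 3*(b + (N:ℝ)/5 - n)^2) :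
    ∃ t ∈ hexLattice (2/5), ∀ q ∈ hexLattice 2, 1 < dist (x + t) q := by
  have hs : Real.sqrt 3 ^ 2 = 3 := Real.sq_sqrt (by norm_num)
  refine ⟨_, ⟨M, N, rfl⟩, ?_⟩
  rintro q ⟨m, n, rfl⟩
  rw [EuclideanSpace.dist_eq, Fin.sum_univ_two]
  rw [show ((1:ℝ) < Real.sqrt _) ↔ _ from Real.lt_sqrt (by norm_num)]
  simp only [PiLp.add_apply, PiLp.smul_apply, pt, Matrix.cons_val_zero, Matrix.cons_val_one,
    Matrix.head_cons, smul_eq_mul, hx0, hx1, Real.dist_eq, sq_abs, one_pow]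
  have e2eq : Real.sqrt 3 * b + ((M:ℝ) * 0 + (N:ℝ) * (Real.sqrt 3 * (2/5)/2)) - ((m:ℝ) * 0 + (n:ℝ) * (Real.sqrt 3 * 2/2)) = Real.sqrt 3 * (b + (N:ℝ)/5 - n) := by ring
  rw [e2eq, mul_pow, hs]
  calc (1:ℝ) < _ := h m n
    _ = _ := by ring

/-- The 25 translates of the interstitium by points of `H/5` cover the fundamental domain:
for every `x ∈ ℝ²` there is `t ∈ H/5` (the hexagonal lattice of minimum distance `2/5`)
such that `x + t` is at distance `> 1` from every point of the hexagonal lattice `H` of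
minimum distance 2. -/
theorem stmt_18 (x : E2) :
    ∃ t ∈ hexLattice (2 / 5), ∀ q ∈ hexLattice 2, 1 < dist (x + t) q := by
  have s3pos : (0:ℝ) < Real.sqrt 3 := Real.sqrt_pos.mpr (by norm_num)
  obtain ⟨a, b, hx0, hx1⟩ : ∃ a b : ℝ, x 0 = 2*a + b ∧ x 1 = Real.sqrt 3 * b :=
    ⟨(x 0 - x 1 / Real.sqrt 3)/2, x 1 / Real.sqrt 3, by ring,
      by rw [mul_div_cancel₀ _ (ne_of_gt s3pos)]⟩
  obtain ⟨F, A, hA0, hA1, haFA⟩ : ∃ (F:ℤ)(A:ℝ), 0 ≤ A ∧ A < 1 ∧ a = ((F:ℝ) + A)/5 :=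
    ⟨⌊5*a⌋, Int.fract (5*a), Int.fract_nonneg _, Int.fract_lt_one _,
      by rw [Int.floor_add_fract]; ring⟩
  obtain ⟨G, B, hB0, hB1, hbGB⟩ : ∃ (G:ℤ)(B:ℝ), 0 ≤ B ∧ B < 1 ∧ b = ((G:ℝ) + B)/5 :=
    ⟨⌊5*b⌋, Int.fract (5*b), Int.fract_nonneg _, Int.fract_lt_one _,
      by rw [Int.floor_add_fract]; ring⟩
  rcases le_or_gt (A + B) 1 with hAB | hAB
  · refine dist_lemma x a b hx0 hx1 (3 - F) (3 - G) ?_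
    intro m n
    have hk := key (1/15 - A/5) (1/15 - B/5) (by linarith) (by linarith) (by linarith)
      (by linarith) (by linarith) (1 - m) (1 - n)
    calc (1:ℝ) < _ := hk
      _ = _ := by rw [haFA, hbGB]; push_cast; ring
  · refine dist_lemma x a b hx0 hx1 (1 - F) (1 - G) ?_
    intro m n
    have hk := key (A/5 - 2/15) (B/5 - 2/15) (by linarith) (by linarith) (by linarith)
      (by linarith) (by linarith) m n
    calc (1:ℝ) < _ := hk
      _ = _ := by rw [haFA, hbGB]; push_cast; ring
end
end
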